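/- Let ν ≥ 0 and α > -1, and let p(x) = x³ + a₁x² + a₂x + a₃ be the monic cubic satisfying ∫₀^∞ p(x) x^(k+α) ρ_ν(x) dx = 0 for k = 0,1 and ∫₀^∞ p(x) x^α ρ_(ν+1)(x) dx = 0. Then its constant coefficient is a₃ = -(3+α+ν)(2+α+ν)(1+α+ν)(3+α)(2+α)(1+α). -/

import Mathlib

open MeasureTheory Real Set

noncomputable def rho (ν x : ℝ) : ℝ :=
  ∫ t in Set.Ioi (0:ℝ), t ^ (ν - 1) * Real.exp (-t - x / t)

noncomputable def K (ν z : ℝ) : ℝ :=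
  (1/2) * (z/2) ^ ν * ∫ t in Set.Ioi (0:ℝ), Real.exp (-t - z^2 / (4*t)) * t ^ (-ν - 1)


-- continuity of kernel on the open quadrant
lemma kernel_contOn (ν : ℝ) : ContinuousOn (fun p : ℝ × ℝ =>
    p.1 ^ (ν - 1) * Real.exp (-p.1 - p.2 / p.1)) (Ioi (0:ℝ) ×ˢ Ioi (0:ℝ)) := by
  apply ContinuousOn.mul
  · apply ContinuousOn.rpow_const continuous_fst.continuousOn
    intro p hp
    exact Or.inl (ne_of_gt hp.1)
  · apply Real.continuous_exp.comp_continuousOn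
    apply ContinuousOn.sub continuous_fst.continuousOn.neg
    exact ContinuousOn.div continuous_snd.continuousOn continuous_fst.continuousOn
      (fun p hp => ne_of_gt hp.1)

lemma kernel_contOn_t (ν x : ℝ) : ContinuousOn (fun t : ℝ =>
    t ^ (ν - 1) * Real.exp (-t - x / t)) (Ioi (0:ℝ)) := by
  apply ContinuousOn.mul
  · exact ContinuousOn.rpow_const continuous_id.continuousOn
      (fun t ht => Or.inl (ne_of_gt ht))
  · exact Real.continuous_exp.comp_continuousOn <| ContinuousOn.sub
      continuous_id.continuousOn.neg <| ContinuousOn.div continuousOn_const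
      continuous_id.continuousOn (fun t ht => ne_of_gt ht)

lemma kernel_integrable {ν x : ℝ} (hν : 0 ≤ ν) (hx : 0 < x) :
    IntegrableOn (fun t => t ^ (ν - 1) * Real.exp (-t - x / t)) (Ioi 0) := by
  have hmeas : ∀ s ⊆ Ioi (0:ℝ), MeasurableSet s → AEStronglyMeasurable
      (fun t : ℝ => t ^ (ν - 1) * Real.exp (-t - x / t)) (volume.restrict s) :=
    fun s hs hms => ((kernel_contOn_t ν x).mono hs).aestronglyMeasurable hms
  have h01 : IntegrableOn (fun t => t ^ (ν - 1) * Real.exp (-t - x / t)) (Ioo 0 1) := by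
    have hbound : IntegrableOn (fun t : ℝ => (4 / x ^ 2) * t ^ (ν + 1)) (Ioo 0 1) := by
      apply Integrable.const_mul
      rw [← IntegrableOn, intervalIntegral.integrableOn_Ioo_rpow_iff zero_lt_one]
      linarith
    apply Integrable.mono' hbound (hmeas _ Ioo_subset_Ioi_self measurableSet_Ioo)
    filter_upwards [ae_restrict_mem measurableSet_Ioo] with t ht
    have ht0 : 0 < t := ht.1
    rw [norm_mul, norm_of_nonneg (rpow_nonneg ht0.le _), norm_of_nonneg (exp_pos _).le]
    have h1 : Real.exp (-t - x / t) ≤ Real.exp (-(x / t)) := by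
      apply Real.exp_le_exp.2; linarith [ht0.le]
    have hxt : 0 < x / t := div_pos hx ht0
    have h2 : Real.exp (-(x / t)) ≤ 4 / (x / t) ^ 2 := by
      set s := x / t with hs
      rw [le_div_iff₀ (by positivity), Real.exp_neg]
      rw [inv_mul_le_iff₀ (Real.exp_pos s)]
      have l1 := Real.add_one_le_exp (s / 2)
      have l2 : Real.exp (s/2) * Real.exp (s/2) = Real.exp s := by
        rw [← Real.exp_add]; ring_nf
      nlinarith [Real.exp_pos (s/2), hxt]
    have h4 : t ^ (ν - 1) * (4 / (x / t) ^ 2) = (4 / x ^ 2) * (t ^ (ν - 1) * t ^ 2) := by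
      field_simp
    have h5 : t ^ (ν - 1) * t ^ (2:ℝ) = t ^ (ν + 1) := by
      rw [← Real.rpow_add ht0]
      congr 1
      ring
    calc t ^ (ν - 1) * Real.exp (-t - x / t)
        ≤ t ^ (ν - 1) * (4 / (x / t) ^ 2) := by
          apply mul_le_mul_of_nonneg_left (le_trans h1 h2) (rpow_nonneg ht0.le _)
      _ = (4 / x ^ 2) * (t ^ (ν - 1) * t ^ 2) := h4
      _ = (4 / x ^ 2) * t ^ (ν + 1) := by
          rw [show (t:ℝ)^2 = t ^ (2:ℝ) by rw [← Real.rpow_natCast t 2]; norm_num, h5]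
  have h1i : IntegrableOn (fun t => t ^ (ν - 1) * Real.exp (-t - x / t)) (Ici 1) := by
    have hbound : IntegrableOn (fun t : ℝ => Real.exp (-t) * t ^ ((ν + 1) - 1)) (Ici 1) :=
      (Real.GammaIntegral_convergent (by linarith : (0:ℝ) < ν + 1)).mono_set
        (fun t ht => mem_Ioi.2 (lt_of_lt_of_le zero_lt_one (mem_Ici.1 ht)))
    apply Integrable.mono' hbound (hmeas _ (fun t ht => mem_Ioi.2 (lt_of_lt_of_le zero_lt_one (mem_Ici.1 ht)))
      measurableSet_Ici)
    filter_upwards [ae_restrict_mem measurableSet_Ici] with t ht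
    have ht0 : (0:ℝ) < t := lt_of_lt_of_le zero_lt_one ht
    rw [norm_mul, norm_of_nonneg (rpow_nonneg ht0.le _), norm_of_nonneg (exp_pos _).le]
    have h1 : Real.exp (-t - x / t) ≤ Real.exp (-t) := by
      apply Real.exp_le_exp.2
      have : 0 < x / t := div_pos hx ht0
      linarith
    have h2 : t ^ (ν - 1) ≤ t ^ ((ν+1) - 1) := by
      apply Real.rpow_le_rpow_of_exponent_le ht <;> linarith
    calc t ^ (ν - 1) * Real.exp (-t - x / t) ≤ t ^ ((ν+1)-1) * Real.exp (-t) := by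
          apply mul_le_mul h2 h1 (exp_pos _).le (rpow_nonneg ht0.le _)
      _ = Real.exp (-t) * t ^ ((ν+1)-1) := by ring
  have : Ioi (0:ℝ) ⊆ Ioo 0 1 ∪ Ici 1 := by
    intro t ht
    rcases lt_or_ge t 1 with h | h
    · exact Or.inl ⟨ht, h⟩
    · exact Or.inr h
  exact (h01.union h1i).mono_set this

lemma rho_nonneg (ν x : ℝ) : 0 ≤ rho ν x := by
  apply setIntegral_nonneg measurableSet_Ioi
  intro t ht
  exact mul_nonneg (rpow_nonneg (le_of_lt ht) _) (exp_pos _).le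

lemma moment {ν μ : ℝ} (hν : 0 ≤ ν) (hμ : -1 < μ) :
    IntegrableOn (fun x => x ^ μ * rho ν x) (Ioi 0) ∧
    ∫ x in Ioi 0, x ^ μ * rho ν x = Real.Gamma (μ + ν + 1) * Real.Gamma (μ + 1) := by
  have hμ1 : (0:ℝ) < μ + 1 := by linarith
  have hμν1 : (0:ℝ) < μ + ν + 1 := by linarith
  -- joint kernel continuity / measurability
  have hK : ContinuousOn (fun p : ℝ × ℝ => p.1 ^ μ * (p.2 ^ (ν - 1) *
      Real.exp (-p.2 - p.1 / p.2))) (Ioi (0:ℝ) ×ˢ Ioi (0:ℝ)) := by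
    apply ContinuousOn.mul
    · exact ContinuousOn.rpow_const continuous_fst.continuousOn
        (fun p hp => Or.inl (ne_of_gt hp.1))
    · apply ContinuousOn.mul
      · exact ContinuousOn.rpow_const continuous_snd.continuousOn
          (fun p hp => Or.inl (ne_of_gt hp.2))
      · exact Real.continuous_exp.comp_continuousOn <| ContinuousOn.sub
          continuous_snd.continuousOn.neg <| ContinuousOn.div
          continuous_fst.continuousOn continuous_snd.continuousOn
          (fun p hp => ne_of_gt hp.2)
  have hKmeas : AEStronglyMeasurable (fun p : ℝ × ℝ => p.1 ^ μ * (p.2 ^ (ν - 1) *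
      Real.exp (-p.2 - p.1 / p.2)))
      ((volume.restrict (Ioi 0)).prod (volume.restrict (Ioi 0))) := by
    rw [Measure.prod_restrict]
    exact hK.aestronglyMeasurable (measurableSet_Ioi.prod measurableSet_Ioi)
  -- a.e. pointwise identity: ofReal (x^μ * rho ν x) = inner lintegral
  have step1 : ∀ x ∈ Ioi (0:ℝ), ENNReal.ofReal (x ^ μ * rho ν x) =
      ∫⁻ t in Ioi 0, ENNReal.ofReal (x ^ μ * (t ^ (ν - 1) * Real.exp (-t - x / t))) := by
    intro x hx
    have hint : IntegrableOn (fun t => x ^ μ * (t ^ (ν - 1) * Real.exp (-t - x / t)))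
        (Ioi 0) := (kernel_integrable hν hx).const_mul _
    have hval : x ^ μ * rho ν x = ∫ t in Ioi 0, x ^ μ * (t ^ (ν - 1) *
        Real.exp (-t - x / t)) := by
      rw [rho, ← integral_const_mul]
    rw [hval, ← ofReal_integral_eq_lintegral_ofReal hint]
    filter_upwards [ae_restrict_mem measurableSet_Ioi] with t ht
    exact mul_nonneg (rpow_nonneg (le_of_lt hx) _)
      (mul_nonneg (rpow_nonneg (le_of_lt ht) _) (exp_pos _).le)
  -- key lintegral computation
  have key : ∫⁻ x in Ioi 0, ENNReal.ofReal (x ^ μ * rho ν x) =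
      ENNReal.ofReal (Real.Gamma (μ + ν + 1) * Real.Gamma (μ + 1)) := by
    rw [setLIntegral_congr_fun measurableSet_Ioi
      step1]
    have hswap : AEMeasurable (Function.uncurry fun x t : ℝ =>
        ENNReal.ofReal (x ^ μ * (t ^ (ν - 1) * Real.exp (-t - x / t))))
        ((volume.restrict (Ioi 0)).prod (volume.restrict (Ioi 0))) := by
      exact
        (ENNReal.measurable_ofReal.comp_aemeasurable hKmeas.aemeasurable)
    rw [lintegral_lintegral_swap hswap]
    -- inner x-integral
    have inner : ∀ t ∈ Ioi (0:ℝ),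
        (∫⁻ x in Ioi 0, ENNReal.ofReal (x ^ μ * (t ^ (ν - 1) * Real.exp (-t - x / t))))
        = ENNReal.ofReal ((t ^ (ν - 1) * Real.exp (-t)) *
            (t ^ (μ + 1) * Real.Gamma (μ + 1))) := by
      intro t ht
      have ht0 : (0:ℝ) < t := ht
      have hrw : ∀ x : ℝ, x ^ μ * (t ^ (ν - 1) * Real.exp (-t - x / t)) =
          (t ^ (ν - 1) * Real.exp (-t)) * (x ^ ((μ + 1) - 1) * Real.exp (-((1/t) * x))) := by
        intro x
        rw [show -t - x / t = -t + -((1/t) * x) by field_simp; ring, Real.exp_add]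
        ring_nf
      simp_rw [hrw]
      have hintg : IntegrableOn (fun x : ℝ => x ^ ((μ + 1) - 1) *
          Real.exp (-((1/t) * x))) (Ioi 0) := by
        have := integrableOn_rpow_mul_exp_neg_mul_rpow (p := 1) (s := (μ + 1) - 1)
          (b := 1/t) (by linarith) zero_lt_one (by positivity)
        simpa [Real.rpow_one, neg_mul] using this
      rw [← ofReal_integral_eq_lintegral_ofReal (hintg.const_mul _) ?_]
      · congr 1
        rw [integral_const_mul, Real.integral_rpow_mul_exp_neg_mul_Ioi hμ1 (by positivity)]
        rw [one_div_one_div]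
      · filter_upwards [ae_restrict_mem measurableSet_Ioi] with x hx
        exact mul_nonneg (by positivity)
          (mul_nonneg (rpow_nonneg (le_of_lt hx) _) (exp_pos _).le)
    rw [setLIntegral_congr_fun measurableSet_Ioi inner]
    -- outer t-integral
    have outer : ∀ t ∈ Ioi (0:ℝ),
        ENNReal.ofReal ((t ^ (ν - 1) * Real.exp (-t)) * (t ^ (μ + 1) * Real.Gamma (μ + 1)))
        = ENNReal.ofReal (Real.Gamma (μ + 1) *
            (Real.exp (-t) * t ^ ((μ + ν + 1) - 1))) := by
      intro t ht
      have ht0 : (0:ℝ) < t := ht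
      congr 1
      have hr : t ^ (ν - 1) * Real.exp (-t) * (t ^ (μ + 1) * Real.Gamma (μ + 1)) =
          Real.Gamma (μ + 1) * (Real.exp (-t) * (t ^ (ν - 1) * t ^ (μ + 1))) := by ring
      rw [hr, ← Real.rpow_add ht0, show ν - 1 + (μ + 1) = (μ + ν + 1) - 1 by ring]
    rw [setLIntegral_congr_fun measurableSet_Ioi outer]
    have hintg2 : IntegrableOn (fun t : ℝ => Real.exp (-t) * t ^ ((μ + ν + 1) - 1))
        (Ioi 0) := Real.GammaIntegral_convergent hμν1
    rw [← ofReal_integral_eq_lintegral_ofReal (hintg2.const_mul _) ?_]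
    · rw [integral_const_mul, ← Real.Gamma_eq_integral hμν1, mul_comm]
    · filter_upwards [ae_restrict_mem measurableSet_Ioi] with t ht
      exact mul_nonneg (Real.Gamma_nonneg_of_nonneg hμ1.le)
        (mul_nonneg (exp_pos _).le (rpow_nonneg (le_of_lt ht) _))
  -- deduce integrability and the value
  have hnonneg : 0 ≤ᵐ[volume.restrict (Ioi (0:ℝ))] fun x => x ^ μ * rho ν x := by
    filter_upwards [ae_restrict_mem measurableSet_Ioi] with x hx
    exact mul_nonneg (rpow_nonneg (le_of_lt hx) _) (rho_nonneg ν x)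
  have hmeas : AEStronglyMeasurable (fun x => x ^ μ * rho ν x)
      (volume.restrict (Ioi (0:ℝ))) := by
    apply AEStronglyMeasurable.mul
    · exact (ContinuousOn.rpow_const continuous_id.continuousOn
        (fun x hx => Or.inl (ne_of_gt hx))).aestronglyMeasurable measurableSet_Ioi
    · have : AEStronglyMeasurable (fun p : ℝ × ℝ => p.2 ^ (ν - 1) *
          Real.exp (-p.2 - p.1 / p.2))
          ((volume.restrict (Ioi 0)).prod (volume.restrict (Ioi 0))) := by
        rw [Measure.prod_restrict]
        apply ContinuousOn.aestronglyMeasurable _ (measurableSet_Ioi.prod measurableSet_Ioi)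
        apply ContinuousOn.mul
        · exact ContinuousOn.rpow_const continuous_snd.continuousOn
            (fun p hp => Or.inl (ne_of_gt hp.2))
        · exact Real.continuous_exp.comp_continuousOn <| ContinuousOn.sub
            continuous_snd.continuousOn.neg <| ContinuousOn.div
            continuous_fst.continuousOn continuous_snd.continuousOn
            (fun p hp => ne_of_gt hp.2)
      exact this.integral_prod_right'
  have hint : IntegrableOn (fun x => x ^ μ * rho ν x) (Ioi 0) := by
    refine ⟨hmeas, ?_⟩
    rw [hasFiniteIntegral_iff_ofReal hnonneg, key]
    exact ENNReal.ofReal_lt_top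
  refine ⟨hint, ?_⟩
  rw [integral_eq_lintegral_of_nonneg_ae hnonneg hmeas, key, ENNReal.toReal_ofReal]
  exact mul_nonneg (Real.Gamma_nonneg_of_nonneg hμν1.le) (Real.Gamma_nonneg_of_nonneg hμ1.le)

lemma expand (ν c a₁ a₂ a₃ : ℝ) (hν : 0 ≤ ν) (hc : -1 < c) :
    ∫ x in Ioi 0, (x ^ 3 + a₁ * x ^ 2 + a₂ * x + a₃) * x ^ c * rho ν x
    = (Real.Gamma (c + 3 + ν + 1) * Real.Gamma (c + 3 + 1))
      + a₁ * (Real.Gamma (c + 2 + ν + 1) * Real.Gamma (c + 2 + 1))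
      + a₂ * (Real.Gamma (c + 1 + ν + 1) * Real.Gamma (c + 1 + 1))
      + a₃ * (Real.Gamma (c + ν + 1) * Real.Gamma (c + 1)) := by
  have m3 := moment hν (show (-1:ℝ) < c + 3 by linarith)
  have m2 := moment hν (show (-1:ℝ) < c + 2 by linarith)
  have m1 := moment hν (show (-1:ℝ) < c + 1 by linarith)
  have m0 := moment hν hc
  have hsplit : ∫ x in Ioi 0, (x ^ 3 + a₁ * x ^ 2 + a₂ * x + a₃) * x ^ c * rho ν x
      = ∫ x in Ioi 0, (x ^ (c + 3) * rho ν x + a₁ * (x ^ (c + 2) * rho ν x)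
        + a₂ * (x ^ (c + 1) * rho ν x) + a₃ * (x ^ c * rho ν x)) := by
    apply setIntegral_congr_fun measurableSet_Ioi
    intro x hx
    have e3 : x ^ (c + 3) = x ^ (3:ℕ) * x ^ c := by
      rw [Real.rpow_add hx, ← Real.rpow_natCast x 3]
      norm_num
      ring
    have e2 : x ^ (c + 2) = x ^ (2:ℕ) * x ^ c := by
      rw [Real.rpow_add hx, ← Real.rpow_natCast x 2]
      norm_num
      ring
    have e1 : x ^ (c + 1) = x * x ^ c := by
      rw [Real.rpow_add hx, Real.rpow_one]
      ring
    simp only [e3, e2, e1]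
    ring
  have i2 : Integrable (fun x => x ^ (c + 3) * rho ν x + a₁ * (x ^ (c + 2) * rho ν x))
      (volume.restrict (Ioi 0)) := m3.1.add (m2.1.const_mul a₁)
  have i3 : Integrable (fun x => x ^ (c + 3) * rho ν x + a₁ * (x ^ (c + 2) * rho ν x)
      + a₂ * (x ^ (c + 1) * rho ν x)) (volume.restrict (Ioi 0)) :=
    i2.add (m1.1.const_mul a₂)
  rw [hsplit, integral_add i3 (m0.1.const_mul a₃), integral_add i2 (m1.1.const_mul a₂),
    integral_add m3.1 (m2.1.const_mul a₁),
    integral_const_mul, integral_const_mul, integral_const_mul,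
    m3.2, m2.2, m1.2, m0.2]


theorem type2_p21_constant_coeff (ν α a₁ a₂ a₃ : ℝ) (hν : 0 ≤ ν) (hα : -1 < α)
    (h1 : ∀ k : ℕ, k ≤ 1 →
      ∫ x in Set.Ioi (0:ℝ),
        (x ^ 3 + a₁ * x ^ 2 + a₂ * x + a₃) * x ^ ((k : ℝ) + α) * rho ν x = 0)
    (h2 : ∫ x in Set.Ioi (0:ℝ),
        (x ^ 3 + a₁ * x ^ 2 + a₂ * x + a₃) * x ^ α * rho (ν + 1) x = 0) :
    a₃ = -(3 + α + ν) * (2 + α + ν) * (1 + α + ν) * (3 + α) * (2 + α) * (1 + α) := by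
  have hE0 := (expand ν (((0:ℕ):ℝ) + α) a₁ a₂ a₃ hν (by norm_num; linarith)).symm.trans
    (h1 0 (by norm_num))
  have hE1 := (expand ν (((1:ℕ):ℝ) + α) a₁ a₂ a₃ hν (by norm_num; linarith)).symm.trans
    (h1 1 (by norm_num))
  have hE2 := (expand (ν + 1) α a₁ a₂ a₃ (by linarith) hα).symm.trans h2
  norm_num at hE0 hE1
  ring_nf at hE0 hE1 hE2
  have G : ∀ s : ℝ, 0 < s → Real.Gamma (s + 1) = s * Real.Gamma s :=
    fun s hs => Real.Gamma_add_one hs.ne'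
  have B1 : Real.Gamma (2 + α + ν) = (1 + α + ν) * Real.Gamma (1 + α + ν) := by
    rw [show (2 + α + ν : ℝ) = (1 + α + ν) + 1 by ring]; exact G _ (by linarith)
  have B2 : Real.Gamma (3 + α + ν) = (2 + α + ν) * ((1 + α + ν) * Real.Gamma (1 + α + ν)) := by
    rw [show (3 + α + ν : ℝ) = (2 + α + ν) + 1 by ring, G _ (by linarith), B1]
  have B3 : Real.Gamma (4 + α + ν) = (3 + α + ν) * ((2 + α + ν) * ((1 + α + ν) *
      Real.Gamma (1 + α + ν))) := by
    rw [show (4 + α + ν : ℝ) = (3 + α + ν) + 1 by ring, G _ (by linarith), B2]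
  have B4 : Real.Gamma (5 + α + ν) = (4 + α + ν) * ((3 + α + ν) * ((2 + α + ν) * ((1 + α + ν) *
      Real.Gamma (1 + α + ν)))) := by
    rw [show (5 + α + ν : ℝ) = (4 + α + ν) + 1 by ring, G _ (by linarith), B3]
  have C1 : Real.Gamma (2 + α) = (1 + α) * Real.Gamma (1 + α) := by
    rw [show (2 + α : ℝ) = (1 + α) + 1 by ring]; exact G _ (by linarith)
  have C2 : Real.Gamma (3 + α) = (2 + α) * ((1 + α) * Real.Gamma (1 + α)) := by
    rw [show (3 + α : ℝ) = (2 + α) + 1 by ring, G _ (by linarith), C1]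
  have C3 : Real.Gamma (4 + α) = (3 + α) * ((2 + α) * ((1 + α) * Real.Gamma (1 + α))) := by
    rw [show (4 + α : ℝ) = (3 + α) + 1 by ring, G _ (by linarith), C2]
  have C4 : Real.Gamma (5 + α) = (4 + α) * ((3 + α) * ((2 + α) * ((1 + α) *
      Real.Gamma (1 + α)))) := by
    rw [show (5 + α : ℝ) = (4 + α) + 1 by ring, G _ (by linarith), C3]
  simp only [B4, B3, B2, B1, C4, C3, C2, C1] at hE0 hE1 hE2
  have hABne : Real.Gamma (1 + α + ν) * Real.Gamma (1 + α) ≠ 0 :=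
    (mul_pos (Real.Gamma_pos_of_pos (by linarith)) (Real.Gamma_pos_of_pos (by linarith))).ne'
  apply mul_left_cancel₀ hABne
  linear_combination ((2 + α + ν) * (3 + α + ν) / 2) * hE0 + (1/2 : ℝ) * hE1
    - ((5 + 2*α + ν) / 2) * hE2
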